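/- For X* ~ Sk(λ₁, λ₂) with mean μ = λ₁ - λ₂, the partial mean of the left-censored variable satisfies E[X* · 1_{X* ≥ 1}] = μ · P(X* ≥ 0) + λ₂ · (P(X* = 0) + P(X* = 1)). -/

import Mathlib

open Real Filter

set_option maxHeartbeats 1000000

/-- PMF of the Poisson distribution with mean `l`. -/
noncomputable def poissonPMF (l : ℝ) (n : ℕ) : ℝ :=
  Real.exp (-l) * l ^ n / n.factorial

/-- PMF of the Skellam distribution `Sk(l1, l2)`, i.e. the distribution of the
difference `X₁ - X₂` of independent Poisson variables with means `l1`, `l2`,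
obtained by the convolution formula. -/
noncomputable def skellamPMF (l1 l2 : ℝ) (x : ℤ) : ℝ :=
  ∑' k : ℕ, (if 0 ≤ x + (k : ℤ) then poissonPMF l1 (x + (k : ℤ)).toNat else 0) * poissonPMF l2 k

/-- Modified Bessel function of the first kind of integer order `n`,
`I_n(z) = (z/2)^|n| ∑_{k} (z/2)^{2k}/(k! (k+|n|)!)`, with `I_{-n} = I_n`. -/
noncomputable def besselI (n : ℤ) (z : ℝ) : ℝ :=
  (z / 2) ^ n.natAbs *
    ∑' k : ℕ, (z / 2) ^ (2 * k) / ((k.factorial : ℝ) * (k + n.natAbs).factorial)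

/-- Upper tail probability `P(X* ≥ a)` of the Skellam distribution. -/
noncomputable def skellamTail (l1 l2 : ℝ) (a : ℤ) : ℝ :=
  ∑' x : ℤ, if a ≤ x then skellamPMF l1 l2 x else 0

noncomputable def Pz (l : ℝ) (x : ℤ) : ℝ := if 0 ≤ x then poissonPMF l x.toNat else 0

lemma pois_nonneg {l : ℝ} (hl : 0 ≤ l) (n : ℕ) : 0 ≤ poissonPMF l n := by
  unfold poissonPMF; positivity

lemma pois_summable (l : ℝ) : Summable (poissonPMF l) := by
  have := (Real.summable_pow_div_factorial l).mul_left (Real.exp (-l))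
  refine this.congr fun n => ?_
  unfold poissonPMF; ring

lemma Pz_nonneg {l : ℝ} (hl : 0 ≤ l) (x : ℤ) : 0 ≤ Pz l x := by
  unfold Pz; split
  · exact pois_nonneg hl _
  · exact le_rfl

lemma Pz_le {l : ℝ} (hl : 0 ≤ l) (x : ℤ) : Pz l x ≤ ∑' n, poissonPMF l n := by
  unfold Pz; split
  · exact Summable.le_tsum (pois_summable l) _ (fun j _ => pois_nonneg hl j)
  · exact tsum_nonneg (pois_nonneg hl)

lemma pois_rec (l : ℝ) (n : ℕ) :
    ((n : ℝ) + 1) * poissonPMF l (n + 1) = l * poissonPMF l n := by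
  unfold poissonPMF
  have h : ((n + 1).factorial : ℝ) = ((n : ℝ) + 1) * n.factorial := by
    rw [Nat.factorial_succ]; push_cast; ring
  rw [h, pow_succ]
  have h1 : (n.factorial : ℝ) ≠ 0 := Nat.cast_ne_zero.2 n.factorial_ne_zero
  have h2 : ((n : ℝ) + 1) ≠ 0 := by positivity
  field_simp

lemma Pz_rec (l : ℝ) (x : ℤ) : (x : ℝ) * Pz l x = l * Pz l (x - 1) := by
  unfold Pz
  rcases lt_trichotomy x 0 with h | h | h
  · rw [if_neg (by omega), if_neg (by omega)]; ring
  · subst h; simp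
  · rw [if_pos (by omega), if_pos (by omega)]
    obtain ⟨n, rfl⟩ : ∃ n : ℕ, x = (n : ℤ) + 1 := ⟨(x - 1).toNat, by omega⟩
    have : ((n : ℤ) + 1).toNat = n + 1 := by omega
    rw [this]
    have : ((n : ℤ) + 1 - 1).toNat = n := by omega
    rw [this]
    have := pois_rec l n
    push_cast
    linarith [pois_rec l n]

lemma nat_rec' (l : ℝ) (k : ℕ) : (k : ℝ) * poissonPMF l k = l * Pz l ((k : ℤ) - 1) := by
  have := Pz_rec l (k : ℤ)
  rwa [show Pz l (k : ℤ) = poissonPMF l k by unfold Pz; rw [if_pos (by positivity)]; simp] at this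

lemma skellam_eq (l1 l2 : ℝ) (x : ℤ) :
    skellamPMF l1 l2 x = ∑' k : ℕ, Pz l1 (x + k) * poissonPMF l2 k := rfl

-- inner summability for each fixed x
lemma inner_summable {l1 l2 : ℝ} (hl1 : 0 ≤ l1) (hl2 : 0 ≤ l2) (x : ℤ) :
    Summable fun k : ℕ => Pz l1 (x + k) * poissonPMF l2 k := by
  apply Summable.of_nonneg_of_le
    (fun k => mul_nonneg (Pz_nonneg hl1 _) (pois_nonneg hl2 _))
    (fun k => mul_le_mul_of_nonneg_right (Pz_le hl1 _) (pois_nonneg hl2 _))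
  exact (pois_summable l2).mul_left _

lemma Pz_summable (l : ℝ) : Summable (Pz l) := by
  apply Summable.of_nat_of_neg
  · exact (pois_summable l).congr fun n => by unfold Pz; rw [if_pos (by positivity)]; simp
  · apply summable_of_ne_finset_zero (s := {0})
    intro n hn
    simp only [Finset.mem_singleton] at hn
    unfold Pz
    rw [if_neg (by omega)]

lemma Pz_shift_summable (l : ℝ) (k : ℤ) : Summable fun x : ℤ => Pz l (x + k) :=
  (Pz_summable l).comp_injective (add_left_injective k)

lemma Pz_shift_tsum (l : ℝ) (k : ℤ) : ∑' x : ℤ, Pz l (x + k) = ∑' x : ℤ, Pz l x :=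
  Equiv.tsum_eq (Equiv.addRight k) (Pz l)

-- summability of the double family and hence of skellamPMF
lemma skellam_summable {l1 l2 : ℝ} (hl1 : 0 ≤ l1) (hl2 : 0 ≤ l2) :
    Summable (skellamPMF l1 l2) := by
  have hnn : 0 ≤ fun p : ℕ × ℤ => Pz l1 (p.2 + p.1) * poissonPMF l2 p.1 :=
    fun p => mul_nonneg (Pz_nonneg hl1 _) (pois_nonneg hl2 _)
  have hh : Summable fun p : ℕ × ℤ => Pz l1 (p.2 + p.1) * poissonPMF l2 p.1 := by
    rw [summable_prod_of_nonneg hnn]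
    constructor
    · intro k
      simpa using (Pz_shift_summable l1 k).mul_right (poissonPMF l2 k)
    · have hs : Summable fun k : ℕ => (∑' x : ℤ, Pz l1 x) * poissonPMF l2 k :=
        (pois_summable l2).mul_left _
      apply hs.congr
      intro k
      show _ = ∑' y : ℤ, Pz l1 (y + (k : ℤ)) * poissonPMF l2 k
      rw [tsum_mul_right, Pz_shift_tsum]
  have hg : Summable fun p : ℤ × ℕ => Pz l1 (p.1 + p.2) * poissonPMF l2 p.2 := by
    have := hh.prod_symm
    exact this.congr fun p => rfl
  have := ((summable_prod_of_nonneg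
    (fun p : ℤ × ℕ => mul_nonneg (Pz_nonneg hl1 _) (pois_nonneg hl2 _))).1 hg).2
  exact this.congr fun x => by rw [skellam_eq]

lemma skellam_nonneg {l1 l2 : ℝ} (hl1 : 0 ≤ l1) (hl2 : 0 ≤ l2) (x : ℤ) :
    0 ≤ skellamPMF l1 l2 x := by
  rw [skellam_eq]
  exact tsum_nonneg fun k => mul_nonneg (Pz_nonneg hl1 _) (pois_nonneg hl2 _)

lemma shift_summable2 {l1 l2 : ℝ} (hl1 : 0 ≤ l1) (hl2 : 0 ≤ l2) (x : ℤ) :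
    Summable fun k : ℕ => Pz l1 (x + k) * Pz l2 ((k : ℤ) - 1) := by
  apply Summable.of_nonneg_of_le
    (fun k => mul_nonneg (Pz_nonneg hl1 _) (Pz_nonneg hl2 _))
    (fun k => mul_le_mul_of_nonneg_right (Pz_le hl1 _) (Pz_nonneg hl2 _))
  apply Summable.mul_left
  apply (summable_nat_add_iff 1).1
  apply (pois_summable l2).congr
  intro n
  unfold Pz
  rw [if_pos (by omega)]
  congr 1
  omega

lemma stein (l1 l2 : ℝ) (h1 : 0 < l1) (h2 : 0 < l2) (x : ℤ) :
    (x : ℝ) * skellamPMF l1 l2 x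
      = l1 * skellamPMF l1 l2 (x - 1) - l2 * skellamPMF l1 l2 (x + 1) := by
  have hl1 := h1.le
  have hl2 := h2.le
  -- rewrite p(x+1) as a sum over shifted index
  have hshift : skellamPMF l1 l2 (x + 1) = ∑' k : ℕ, Pz l1 (x + k) * Pz l2 ((k : ℤ) - 1) := by
    rw [skellam_eq]
    rw [Summable.tsum_eq_zero_add (shift_summable2 hl1 hl2 x)]
    have h0 : Pz l1 (x + (0 : ℕ)) * Pz l2 ((0 : ℕ) - 1 : ℤ) = 0 := by
      have : Pz l2 ((0 : ℕ) - 1 : ℤ) = 0 := by unfold Pz; rw [if_neg (by omega)]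
      rw [this, mul_zero]
    rw [h0, zero_add]
    apply tsum_congr
    intro k
    push_cast
    rw [show x + ((k : ℤ) + 1) = x + 1 + (k : ℤ) by ring,
        show (k : ℤ) + 1 - 1 = (k : ℤ) by ring]
    simp [Pz]
  rw [skellam_eq, ← tsum_mul_left]
  have key : ∀ k : ℕ, (x : ℝ) * (Pz l1 (x + k) * poissonPMF l2 k)
      = l1 * (Pz l1 ((x - 1) + k) * poissonPMF l2 k)
        - l2 * (Pz l1 (x + k) * Pz l2 ((k : ℤ) - 1)) := by
    intro k
    have hA : ((x + k : ℤ) : ℝ) * Pz l1 (x + k) = l1 * Pz l1 ((x - 1) + k) := by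
      rw [Pz_rec l1 (x + k)]
      congr 2
      ring
    have hB : (k : ℝ) * poissonPMF l2 k = l2 * Pz l2 ((k : ℤ) - 1) := nat_rec' l2 k
    have hx : (x : ℝ) = ((x + k : ℤ) : ℝ) - (k : ℝ) := by push_cast; ring
    rw [hx]
    linear_combination (poissonPMF l2 k) * hA - (Pz l1 (x + (k : ℤ))) * hB
  rw [tsum_congr key]
  rw [Summable.tsum_sub ((Summable.mul_left l1 ?_)) ((shift_summable2 hl1 hl2 x).mul_left l2)]
  · rw [tsum_mul_left, tsum_mul_left, ← skellam_eq, ← hshift]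
  · exact inner_summable hl1 hl2 (x - 1)

lemma ite_summable {l1 l2 : ℝ} (hl1 : 0 ≤ l1) (hl2 : 0 ≤ l2) (c : ℤ → Prop) [DecidablePred c]
    {g : ℤ → ℤ} (hg : Function.Injective g) :
    Summable fun x : ℤ => if c x then skellamPMF l1 l2 (g x) else 0 := by
  apply Summable.of_nonneg_of_le
    (fun x => by split <;> [exact skellam_nonneg hl1 hl2 _; exact le_rfl])
    (fun x => by split <;> [exact le_rfl; exact skellam_nonneg hl1 hl2 _])
  exact (skellam_summable hl1 hl2).comp_injective hg

lemma tail_succ {l1 l2 : ℝ} (hl1 : 0 ≤ l1) (hl2 : 0 ≤ l2) (a : ℤ) :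
    skellamTail l1 l2 a = skellamPMF l1 l2 a + skellamTail l1 l2 (a + 1) := by
  unfold skellamTail
  have hs : Summable (fun x : ℤ => if a ≤ x then skellamPMF l1 l2 x else 0) := by
    simpa using ite_summable hl1 hl2 (a ≤ ·) (g := id) Function.injective_id
  rw [Summable.tsum_eq_add_tsum_ite hs a]
  congr 1
  · rw [if_pos le_rfl]
  · apply tsum_congr
    intro x
    by_cases h : x = a
    · subst h; rw [if_pos rfl, if_neg (by omega)]
    · rw [if_neg h]
      by_cases h2 : a ≤ x
      · by_cases h3 : a + 1 ≤ x
        · rw [if_pos h2, if_pos h3]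
        · omega
      · rw [if_neg h2, if_neg (by omega)]

theorem skellam_partial_mean (l1 l2 : ℝ) (h1 : 0 < l1) (h2 : 0 < l2) :
    ∑' x : ℤ, (if 1 ≤ x then (x : ℝ) else 0) * skellamPMF l1 l2 x =
      (l1 - l2) * skellamTail l1 l2 0
        + l2 * (skellamPMF l1 l2 0 + skellamPMF l1 l2 1) := by
  have hl1 := h1.le
  have hl2 := h2.le
  set p := skellamPMF l1 l2 with hpdef
  have key : ∀ x : ℤ, (if 1 ≤ x then (x : ℝ) else 0) * p x
      = l1 * (if 1 ≤ x then p (x - 1) else 0) - l2 * (if 1 ≤ x then p (x + 1) else 0) := by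
    intro x
    by_cases h : 1 ≤ x
    · rw [if_pos h, if_pos h, if_pos h, stein l1 l2 h1 h2 x]
    · rw [if_neg h, if_neg h, if_neg h]; ring
  have S1 : Summable fun x : ℤ => if 1 ≤ x then p (x - 1) else 0 :=
    ite_summable hl1 hl2 (1 ≤ ·) (sub_left_injective)
  have S2 : Summable fun x : ℤ => if 1 ≤ x then p (x + 1) else 0 :=
    ite_summable hl1 hl2 (1 ≤ ·) (add_left_injective 1)
  rw [tsum_congr key, Summable.tsum_sub (S1.mul_left l1) (S2.mul_left l2),
      tsum_mul_left, tsum_mul_left]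
  have T1 : ∑' x : ℤ, (if 1 ≤ x then p (x - 1) else 0) = skellamTail l1 l2 0 := by
    rw [← Equiv.tsum_eq (Equiv.addRight (1 : ℤ))
      (fun x : ℤ => if 1 ≤ x then p (x - 1) else 0)]
    apply tsum_congr
    intro y
    show (if 1 ≤ y + 1 then p (y + 1 - 1) else 0) = _
    by_cases h : (0 : ℤ) ≤ y
    · rw [if_pos (by omega), if_pos h]
      congr 1
      omega
    · rw [if_neg (by omega), if_neg h]
  have T2 : ∑' x : ℤ, (if 1 ≤ x then p (x + 1) else 0) = skellamTail l1 l2 2 := by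
    rw [← Equiv.tsum_eq (Equiv.subRight (1 : ℤ))
      (fun x : ℤ => if 1 ≤ x then p (x + 1) else 0)]
    apply tsum_congr
    intro y
    show (if 1 ≤ y - 1 then p (y - 1 + 1) else 0) = _
    by_cases h : (2 : ℤ) ≤ y
    · rw [if_pos (by omega), if_pos h]
      congr 1
      omega
    · rw [if_neg (by omega), if_neg h]
  rw [T1, T2]
  have E1 := tail_succ hl1 hl2 (l1 := l1) (l2 := l2) 0
  have E2 := tail_succ hl1 hl2 (l1 := l1) (l2 := l2) 1
  rw [show (0 : ℤ) + 1 = 1 by ring] at E1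
  rw [show (1 : ℤ) + 1 = 2 by ring] at E2
  rw [← hpdef] at E1 E2
  rw [E1, E2]
  ring
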